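/- (Multi-marginal limit characterizes linear GW.) For ε > 0 define the cost c_ε((s,x,y),(s',x',y')) = ε(d_X(x,x') − d_Y(y,y'))² + (d_S(s,s') − d_X(x,x'))² + (d_S(s,s') − d_Y(y,y'))², and let π_ε ∈ Π(σ,μ,ν) minimize the quadratic functional π ↦ ∬ c_ε dπ dπ. Then every weak accumulation point π̄ of (π_ε)_{ε>0} as ε → 0 satisfies: (a) the (S,X)-marginal of π̄ is an optimal GW plan between S and X, (b) the (S,Y)-marginal of π̄ is an optimal GW plan between S and Y, and (c) ∬ |d_X(x,x') − d_Y(y,y')|² dπ̄ dπ̄ = LGW_S(X,Y). -/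

import Mathlib

open MeasureTheory Filter Topology

/-- The Gromov–Wasserstein cost of a plan `π` on `X × Y`. -/
noncomputable def gwCost {X Y : Type*} [PseudoMetricSpace X] [PseudoMetricSpace Y]
    [MeasurableSpace X] [MeasurableSpace Y] (π : Measure (X × Y)) : ℝ :=
  ∫ p, ∫ q, (dist p.1 q.1 - dist p.2 q.2) ^ 2 ∂π ∂π

/-- `π` is a coupling of `μ` and `ν`. -/
def IsCoupling {X Y : Type*} [MeasurableSpace X] [MeasurableSpace Y]
    (π : Measure (X × Y)) (μ : Measure X) (ν : Measure Y) : Prop :=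
  π.map Prod.fst = μ ∧ π.map Prod.snd = ν

/-- The squared Gromov–Wasserstein distance. -/
noncomputable def gwSq {X Y : Type*} [PseudoMetricSpace X] [PseudoMetricSpace Y]
    [MeasurableSpace X] [MeasurableSpace Y] (μ : Measure X) (ν : Measure Y) : ℝ :=
  sInf {c | ∃ π : Measure (X × Y), IsCoupling π μ ν ∧ c = gwCost π}

/-- `π` is an optimal Gromov–Wasserstein plan between `μ` and `ν`. -/
def IsOptGW {X Y : Type*} [PseudoMetricSpace X] [PseudoMetricSpace Y]
    [MeasurableSpace X] [MeasurableSpace Y]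
    (π : Measure (X × Y)) (μ : Measure X) (ν : Measure Y) : Prop :=
  IsCoupling π μ ν ∧ gwCost π = gwSq μ ν

/-- The LGW objective of a three-plan on `S × X × Y`:
`∬ |d_X(x,x') − d_Y(y,y')|² dπ dπ`. -/
noncomputable def lgwCost {S X Y : Type*} [PseudoMetricSpace X] [PseudoMetricSpace Y]
    [MeasurableSpace S] [MeasurableSpace X] [MeasurableSpace Y]
    (π : Measure (S × X × Y)) : ℝ :=
  ∫ p, ∫ q, (dist p.2.1 q.2.1 - dist p.2.2 q.2.2) ^ 2 ∂π ∂π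

/-- The linear Gromov–Wasserstein value with reference `(S, σ)`:
infimum of the LGW objective over three-plans whose `(S,X)`- and `(S,Y)`-marginals
are optimal GW plans. -/
noncomputable def lgw {S X Y : Type*} [PseudoMetricSpace S] [PseudoMetricSpace X]
    [PseudoMetricSpace Y] [MeasurableSpace S] [MeasurableSpace X] [MeasurableSpace Y]
    (σ : Measure S) (μ : Measure X) (ν : Measure Y) : ℝ :=
  sInf {c | ∃ π : Measure (S × X × Y),
    IsOptGW (π.map (fun p => (p.1, p.2.1))) σ μ ∧
    IsOptGW (π.map (fun p => (p.1, p.2.2))) σ ν ∧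
    c = lgwCost π}

/-- The cost `c_ε` on `(S × X × Y)²`. -/
noncomputable def cEps {S X Y : Type*} [PseudoMetricSpace S] [PseudoMetricSpace X]
    [PseudoMetricSpace Y] (ε : ℝ) (p q : S × X × Y) : ℝ :=
  ε * (dist p.2.1 q.2.1 - dist p.2.2 q.2.2) ^ 2
    + (dist p.1 q.1 - dist p.2.1 q.2.1) ^ 2
    + (dist p.1 q.1 - dist p.2.2 q.2.2) ^ 2

/-- The quadratic functional `π ↦ ∬ c_ε dπ dπ` of the ε-multi-marginal GW problem. -/
noncomputable def mgwEps {S X Y : Type*} [PseudoMetricSpace S] [PseudoMetricSpace X]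
    [PseudoMetricSpace Y] [MeasurableSpace S] [MeasurableSpace X] [MeasurableSpace Y]
    (ε : ℝ) (π : Measure (S × X × Y)) : ℝ :=
  ∫ p, ∫ q, cEps ε p q ∂π ∂π

/-- `π ∈ Π(σ, μ, ν)`: three-marginal coupling. -/
def IsTripleCoupling {S X Y : Type*} [MeasurableSpace S] [MeasurableSpace X]
    [MeasurableSpace Y] (π : Measure (S × X × Y))
    (σ : Measure S) (μ : Measure X) (ν : Measure Y) : Prop :=
  π.map Prod.fst = σ ∧ π.map (fun p => p.2.1) = μ ∧ π.map (fun p => p.2.2) = ν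


open MeasureTheory Filter Topology ProbabilityTheory

section MGWAux

variable {T : Type*} [MetricSpace T] [CompactSpace T] [MeasurableSpace T] [BorelSpace T]

lemma mgw_integrable (m : Measure T) [IsFiniteMeasure m] {f : T → ℝ} (hf : Continuous f) :
    Integrable f m :=
  hf.integrable_of_hasCompactSupport ((isClosed_tsupport f).isCompact)

lemma mgw_bound {f : T → ℝ} (hf : Continuous f) : ∃ C : ℝ, ∀ z, |f z| ≤ C :=
  ⟨‖BoundedContinuousFunction.mkOfCompact ⟨f, hf⟩‖, fun z => by
    simpa [Real.norm_eq_abs] using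
      BoundedContinuousFunction.norm_coe_le_norm (BoundedContinuousFunction.mkOfCompact ⟨f, hf⟩) z⟩

lemma mgw_cont_inner (m : Measure T) [IsFiniteMeasure m] {f : T × T → ℝ} (hf : Continuous f) :
    Continuous (fun p => ∫ q, f (p, q) ∂m) := by
  obtain ⟨C, hC⟩ := mgw_bound (T := T × T) hf
  apply continuous_of_dominated (bound := fun _ => C)
  · exact fun x => (hf.comp (Continuous.prodMk_right x)).aestronglyMeasurable
  · exact fun x => Eventually.of_forall fun a => by
      simpa [Real.norm_eq_abs] using hC (x, a)
  · exact integrable_const _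
  · exact Eventually.of_forall fun a => hf.comp (continuous_id.prodMk continuous_const)

/-- The quadratic functional `π ↦ ∬ f dπ dπ`. -/
noncomputable def mgwD {T : Type*} [MeasurableSpace T] (f : T × T → ℝ) (m : Measure T) : ℝ :=
  ∫ p, ∫ q, f (p, q) ∂m ∂m

lemma mgwD_nonneg {T : Type*} [MeasurableSpace T] {f : T × T → ℝ} (hf : ∀ r, 0 ≤ f r)
    (m : Measure T) : 0 ≤ mgwD f m :=
  integral_nonneg fun _ => integral_nonneg fun q => hf _

lemma mgwD_add (m : Measure T) [IsProbabilityMeasure m] {f g : T × T → ℝ}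
    (hf : Continuous f) (hg : Continuous g) :
    mgwD (fun r => f r + g r) m = mgwD f m + mgwD g m := by
  unfold mgwD
  have h1 : ∀ p : T, ∫ q, (f (p, q) + g (p, q)) ∂m
      = (∫ q, f (p, q) ∂m) + ∫ q, g (p, q) ∂m := fun p =>
    integral_add (mgw_integrable m (hf.comp (Continuous.prodMk_right p)))
      (mgw_integrable m (hg.comp (Continuous.prodMk_right p)))
  calc ∫ p, ∫ q, (f (p, q) + g (p, q)) ∂m ∂m
      = ∫ p, ((∫ q, f (p, q) ∂m) + ∫ q, g (p, q) ∂m) ∂m :=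
        integral_congr_ae (Eventually.of_forall h1)
    _ = _ := integral_add (mgw_integrable m (mgw_cont_inner m hf))
        (mgw_integrable m (mgw_cont_inner m hg))

lemma mgwD_smul {T : Type*} [MeasurableSpace T] (c : ℝ) (f : T × T → ℝ) (m : Measure T) :
    mgwD (fun r => c * f r) m = c * mgwD f m := by
  unfold mgwD
  simp_rw [← smul_eq_mul, integral_smul]

lemma mgwD_map {U : Type*} [MetricSpace U] [CompactSpace U] [MeasurableSpace U] [BorelSpace U]
    (m : Measure T) [IsProbabilityMeasure m] {φ : T → U} (hφ : Continuous φ)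
    {f : U × U → ℝ} (hf : Continuous f) :
    mgwD f (m.map φ) = mgwD (fun r => f (φ r.1, φ r.2)) m := by
  unfold mgwD
  rw [integral_map hφ.measurable.aemeasurable
    ((mgw_cont_inner (m.map φ) hf).aestronglyMeasurable)]
  refine integral_congr_ae (Eventually.of_forall fun p => ?_)
  exact integral_map (f := fun q => f (φ p, q)) hφ.measurable.aemeasurable
    ((hf.comp (Continuous.prodMk_right (φ p))).aestronglyMeasurable)

end MGWAux
section MGWTendsto

open MeasureTheory Filter Topology BoundedContinuousFunction

variable {T : Type*} [MetricSpace T] [CompactSpace T] [MeasurableSpace T] [BorelSpace T]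

lemma mgwD_tendsto (πs : ℕ → ProbabilityMeasure T) (π : ProbabilityMeasure T)
    (h : Tendsto πs atTop (𝓝 π)) {f : T × T → ℝ} (hf : Continuous f) :
    Tendsto (fun n => mgwD f (πs n : Measure T)) atTop (𝓝 (mgwD f (π : Measure T))) := by
  set g : T → ℝ := fun p => ∫ q, f (p, q) ∂(π : Measure T) with hgdef
  have hgc : Continuous g := mgw_cont_inner _ hf
  have hB : Tendsto (fun n => ∫ p, g p ∂(πs n : Measure T)) atTop
      (𝓝 (∫ p, g p ∂(π : Measure T))) := by
    have := ProbabilityMeasure.tendsto_iff_forall_integral_tendsto.mp h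
      (BoundedContinuousFunction.mkOfCompact ⟨g, hgc⟩)
    simpa using this
  have key : Tendsto
      (fun n => ∫ p, ((∫ q, f (p, q) ∂(πs n : Measure T)) - g p) ∂(πs n : Measure T))
      atTop (𝓝 0) := by
    rw [NormedAddCommGroup.tendsto_nhds_zero]
    intro ε hε
    set η : ℝ := ε / 4 with hηdef
    have hη0 : 0 < η := by positivity
    obtain ⟨δ, hδ0, hδ⟩ := Metric.uniformContinuous_iff.mp
      (CompactSpace.uniformContinuous_of_continuous hf) η hη0
    obtain ⟨t, tfin, hcov⟩ := Metric.totallyBounded_iff.mp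
      (isCompact_univ (X := T)).totallyBounded δ hδ0
    have hnet : ∀ᶠ n in atTop, ∀ y ∈ t,
        |(∫ q, f (y, q) ∂(πs n : Measure T)) - g y| < η := by
      rw [eventually_all_finite tfin]
      intro y _
      have hty : Tendsto (fun n => ∫ q, f (y, q) ∂(πs n : Measure T)) atTop (𝓝 (g y)) := by
        have := ProbabilityMeasure.tendsto_iff_forall_integral_tendsto.mp h
          (BoundedContinuousFunction.mkOfCompact ⟨fun q => f (y, q),
            hf.comp (Continuous.prodMk_right y)⟩)
        simpa using this
      filter_upwards [hty (Metric.ball_mem_nhds (g y) hη0)] with n hn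
      simpa [Real.dist_eq] using hn
    filter_upwards [hnet] with n hn
    have hpt : ∀ p : T, |(∫ q, f (p, q) ∂(πs n : Measure T)) - g p| ≤ 3 * η := by
      intro p
      obtain ⟨y, hyt, hpy⟩ : ∃ y ∈ t, dist p y < δ := by
        have := hcov (Set.mem_univ p)
        simpa using this
      have hfd : ∀ q : T, |f (p, q) - f (y, q)| ≤ η := by
        intro q
        have hd : dist (p, q) (y, q) < δ := by
          rw [Prod.dist_eq]
          simp only [dist_self]
          exact max_lt hpy hδ0
        have := hδ hd
        rw [Real.dist_eq] at this
        exact this.le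
      have hint : ∀ (m : Measure T) [IsProbabilityMeasure m],
          |(∫ q, f (p, q) ∂m) - ∫ q, f (y, q) ∂m| ≤ η := by
        intro m _
        have ip : Integrable (fun q => f (p, q)) m :=
          mgw_integrable m (hf.comp (Continuous.prodMk_right p))
        have iy : Integrable (fun q => f (y, q)) m :=
          mgw_integrable m (hf.comp (Continuous.prodMk_right y))
        rw [← integral_sub ip iy, ← Real.norm_eq_abs]
        calc ‖∫ q, (f (p, q) - f (y, q)) ∂m‖ ≤ ∫ _, η ∂m := by
              refine norm_integral_le_of_norm_le (integrable_const η)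
                (Eventually.of_forall fun q => ?_)
              simpa [Real.norm_eq_abs] using hfd q
          _ = η := by simp
      have h1 := hint (πs n : Measure T)
      have h2 := hint (π : Measure T)
      have h3 := hn y hyt
      have hgy : |g y - g p| ≤ η := by
        rw [abs_sub_comm]
        exact h2
      calc |(∫ q, f (p, q) ∂(πs n : Measure T)) - g p|
          ≤ |(∫ q, f (p, q) ∂(πs n : Measure T)) - ∫ q, f (y, q) ∂(πs n : Measure T)|
            + |(∫ q, f (y, q) ∂(πs n : Measure T)) - g p| := abs_sub_le _ _ _
        _ ≤ |(∫ q, f (p, q) ∂(πs n : Measure T)) - ∫ q, f (y, q) ∂(πs n : Measure T)|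
            + (|(∫ q, f (y, q) ∂(πs n : Measure T)) - g y| + |g y - g p|) := by
              have := abs_sub_le (∫ q, f (y, q) ∂(πs n : Measure T)) (g y) (g p)
              linarith
        _ ≤ 3 * η := by linarith [h3.le]
    have hnorm : ‖∫ p, ((∫ q, f (p, q) ∂(πs n : Measure T)) - g p) ∂(πs n : Measure T)‖
        ≤ 3 * η := by
      calc ‖∫ p, ((∫ q, f (p, q) ∂(πs n : Measure T)) - g p) ∂(πs n : Measure T)‖
          ≤ ∫ _, 3 * η ∂(πs n : Measure T) := by
            refine norm_integral_le_of_norm_le (integrable_const (3 * η))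
              (Eventually.of_forall fun p => ?_)
            simpa [Real.norm_eq_abs] using hpt p
        _ = 3 * η := by simp
    have : (3 : ℝ) * η < ε := by rw [hηdef]; linarith
    exact lt_of_le_of_lt hnorm this
  have hsplit : ∀ n, mgwD f (πs n : Measure T)
      = (∫ p, ((∫ q, f (p, q) ∂(πs n : Measure T)) - g p) ∂(πs n : Measure T))
        + ∫ p, g p ∂(πs n : Measure T) := by
    intro n
    unfold mgwD
    rw [integral_sub (mgw_integrable _ (mgw_cont_inner _ hf)) (mgw_integrable _ hgc)]
    ring
  have h2 := key.add hB
  rw [zero_add] at h2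
  exact h2.congr fun n => (hsplit n).symm

end MGWTendsto
section MGWGlue

open MeasureTheory Filter Topology ProbabilityTheory

lemma mgw_prob_of_map {Z W : Type*} [MeasurableSpace Z] [MeasurableSpace W] {π : Measure Z}
    {f : Z → W} (hf : Measurable f) {m : Measure W} [IsProbabilityMeasure m]
    (h : π.map f = m) : IsProbabilityMeasure π := by
  constructor
  have h1 : π.map f Set.univ = 1 := by rw [h]; exact measure_univ
  rwa [Measure.map_apply hf MeasurableSet.univ, Set.preimage_univ] at h1

lemma mgw_compProd_map {α β γ' : Type*} [MeasurableSpace α] [MeasurableSpace β]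
    [MeasurableSpace γ'] (m : Measure α) [SFinite m] (ξ : Kernel α β) [IsSFiniteKernel ξ]
    {f : β → γ'} (hf : Measurable f) :
    (m ⊗ₘ ξ).map (Prod.map id f) = m ⊗ₘ (ξ.map f) := by
  ext s hs
  rw [Measure.map_apply (measurable_id.prodMap hf) hs,
    Measure.compProd_apply ((measurable_id.prodMap hf) hs), Measure.compProd_apply hs]
  refine lintegral_congr fun a => ?_
  rw [Kernel.map_apply' _ hf _ (measurable_prodMk_left hs)]
  rfl

variable {S X Y : Type*}
  [MetricSpace S] [CompactSpace S] [MeasurableSpace S] [BorelSpace S]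
  [MetricSpace X] [CompactSpace X] [MeasurableSpace X] [BorelSpace X]
  [MetricSpace Y] [CompactSpace Y] [MeasurableSpace Y] [BorelSpace Y]

/-- Gluing of two couplings over a common first marginal. -/
lemma mgw_glue (σ : Measure S) [IsProbabilityMeasure σ]
    (γ1 : Measure (S × X)) (γ2 : Measure (S × Y))
    [IsProbabilityMeasure γ1] [IsProbabilityMeasure γ2]
    (h1 : γ1.map Prod.fst = σ) (h2 : γ2.map Prod.fst = σ) :
    ∃ π : Measure (S × X × Y),
      π.map (fun p => (p.1, p.2.1)) = γ1 ∧ π.map (fun p => (p.1, p.2.2)) = γ2 := by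
  have hne1 : Nonempty (S × X) := ProbabilityMeasure.nonempty ⟨γ1, inferInstance⟩
  have hne2 : Nonempty (S × Y) := ProbabilityMeasure.nonempty ⟨γ2, inferInstance⟩
  have : Nonempty X := ⟨hne1.some.2⟩
  have : Nonempty Y := ⟨hne2.some.2⟩
  have hf1 : γ1.fst = σ := h1
  have hf2 : γ2.fst = σ := h2
  refine ⟨σ ⊗ₘ (γ1.condKernel ×ₖ γ2.condKernel), ?_, ?_⟩
  · have e1 : (fun p : S × X × Y => (p.1, p.2.1)) = Prod.map id Prod.fst := rfl
    rw [e1, mgw_compProd_map σ _ measurable_fst, ← Kernel.fst_eq, Kernel.fst_prod,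
      ← hf1]
    exact γ1.disintegrate γ1.condKernel
  · have e2 : (fun p : S × X × Y => (p.1, p.2.2)) = Prod.map id Prod.snd := rfl
    rw [e2, mgw_compProd_map σ _ measurable_snd, ← Kernel.snd_eq, Kernel.snd_prod,
      ← hf2]
    exact γ2.disintegrate γ2.condKernel

end MGWGlue
section MGWCost

open MeasureTheory Filter Topology

/-- The GW integrand as a function on pairs. -/
noncomputable def mgwW {X Y : Type*} [PseudoMetricSpace X] [PseudoMetricSpace Y]
    (r : (X × Y) × (X × Y)) : ℝ :=
  (dist r.1.1 r.2.1 - dist r.1.2 r.2.2) ^ 2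

noncomputable def mgwA {S X Y : Type*} [PseudoMetricSpace S] [PseudoMetricSpace X]
    [PseudoMetricSpace Y] (r : (S × X × Y) × (S × X × Y)) : ℝ :=
  (dist r.1.2.1 r.2.2.1 - dist r.1.2.2 r.2.2.2) ^ 2

noncomputable def mgwB1 {S X Y : Type*} [PseudoMetricSpace S] [PseudoMetricSpace X]
    [PseudoMetricSpace Y] (r : (S × X × Y) × (S × X × Y)) : ℝ :=
  (dist r.1.1 r.2.1 - dist r.1.2.1 r.2.2.1) ^ 2

noncomputable def mgwB2 {S X Y : Type*} [PseudoMetricSpace S] [PseudoMetricSpace X]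
    [PseudoMetricSpace Y] (r : (S × X × Y) × (S × X × Y)) : ℝ :=
  (dist r.1.1 r.2.1 - dist r.1.2.2 r.2.2.2) ^ 2

variable {S X Y : Type*}
  [MetricSpace S] [CompactSpace S] [MeasurableSpace S] [BorelSpace S]
  [MetricSpace X] [CompactSpace X] [MeasurableSpace X] [BorelSpace X]
  [MetricSpace Y] [CompactSpace Y] [MeasurableSpace Y] [BorelSpace Y]

lemma mgwW_cont {X Y : Type*} [PseudoMetricSpace X] [PseudoMetricSpace Y] :
    Continuous (mgwW (X := X) (Y := Y)) := by unfold mgwW; fun_prop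

lemma mgwA_cont : Continuous (mgwA (S := S) (X := X) (Y := Y)) := by unfold mgwA; fun_prop

lemma mgwB1_cont : Continuous (mgwB1 (S := S) (X := X) (Y := Y)) := by unfold mgwB1; fun_prop

lemma mgwB2_cont : Continuous (mgwB2 (S := S) (X := X) (Y := Y)) := by unfold mgwB2; fun_prop

lemma mgw_phi1_cont : Continuous (fun p : S × X × Y => (p.1, p.2.1)) := by fun_prop

lemma mgw_phi2_cont : Continuous (fun p : S × X × Y => (p.1, p.2.2)) := by fun_prop

lemma gwCost_nonneg {X Y : Type*} [PseudoMetricSpace X] [PseudoMetricSpace Y]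
    [MeasurableSpace X] [MeasurableSpace Y] (π : Measure (X × Y)) : 0 ≤ gwCost π :=
  integral_nonneg fun _ => integral_nonneg fun _ => sq_nonneg _

lemma lgwCost_nonneg (π : Measure (S × X × Y)) : 0 ≤ lgwCost π :=
  integral_nonneg fun _ => integral_nonneg fun _ => sq_nonneg _

lemma mgw_margCost1 (π : Measure (S × X × Y)) [IsProbabilityMeasure π] :
    gwCost (π.map (fun p => (p.1, p.2.1))) = mgwD mgwB1 π := by
  have h0 : gwCost (π.map (fun p : S × X × Y => (p.1, p.2.1)))
      = mgwD mgwW (π.map (fun p : S × X × Y => (p.1, p.2.1))) := rfl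
  rw [h0, mgwD_map π mgw_phi1_cont mgwW_cont]
  rfl

lemma mgw_margCost2 (π : Measure (S × X × Y)) [IsProbabilityMeasure π] :
    gwCost (π.map (fun p => (p.1, p.2.2))) = mgwD mgwB2 π := by
  have h0 : gwCost (π.map (fun p : S × X × Y => (p.1, p.2.2)))
      = mgwD mgwW (π.map (fun p : S × X × Y => (p.1, p.2.2))) := rfl
  rw [h0, mgwD_map π mgw_phi2_cont mgwW_cont]
  rfl

lemma mgw_split (ε : ℝ) (π : Measure (S × X × Y)) [IsProbabilityMeasure π] :
    mgwEps ε π = ε * lgwCost π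
      + (gwCost (π.map (fun p => (p.1, p.2.1))) + gwCost (π.map (fun p => (p.1, p.2.2)))) := by
  have h3 : mgwEps ε π = mgwD (fun r => (ε * mgwA r + mgwB1 r) + mgwB2 r) π := rfl
  have hL : lgwCost π = mgwD mgwA π := rfl
  rw [h3, mgwD_add π (f := fun r => ε * mgwA r + mgwB1 r) (g := mgwB2)
      (((continuous_const.mul mgwA_cont).add mgwB1_cont)) mgwB2_cont,
    mgwD_add π (f := fun r => ε * mgwA r) (g := mgwB1) (continuous_const.mul mgwA_cont) mgwB1_cont,
    mgwD_smul, hL, mgw_margCost1, mgw_margCost2]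
  ring

lemma mgw_tc_marg1 {π : Measure (S × X × Y)} {σ : Measure S} {μ : Measure X} {ν : Measure Y}
    (h : IsTripleCoupling π σ μ ν) : IsCoupling (π.map (fun p => (p.1, p.2.1))) σ μ := by
  constructor
  · rw [Measure.map_map measurable_fst mgw_phi1_cont.measurable]
    exact h.1
  · rw [Measure.map_map measurable_snd mgw_phi1_cont.measurable]
    exact h.2.1

lemma mgw_tc_marg2 {π : Measure (S × X × Y)} {σ : Measure S} {μ : Measure X} {ν : Measure Y}
    (h : IsTripleCoupling π σ μ ν) : IsCoupling (π.map (fun p => (p.1, p.2.2))) σ ν := by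
  constructor
  · rw [Measure.map_map measurable_fst mgw_phi2_cont.measurable]
    exact h.1
  · rw [Measure.map_map measurable_snd mgw_phi2_cont.measurable]
    exact h.2.2

lemma mgw_marg_tc {π : Measure (S × X × Y)} {σ : Measure S} {μ : Measure X} {ν : Measure Y}
    (h1 : IsCoupling (π.map (fun p => (p.1, p.2.1))) σ μ)
    (h2 : IsCoupling (π.map (fun p => (p.1, p.2.2))) σ ν) :
    IsTripleCoupling π σ μ ν := by
  refine ⟨?_, ?_, ?_⟩
  · have := h1.1
    rwa [Measure.map_map measurable_fst mgw_phi1_cont.measurable] at this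
  · have := h1.2
    rwa [Measure.map_map measurable_snd mgw_phi1_cont.measurable] at this
  · have := h2.2
    rwa [Measure.map_map measurable_snd mgw_phi2_cont.measurable] at this

lemma gwSq_bddBelow {X Y : Type*} [PseudoMetricSpace X] [PseudoMetricSpace Y]
    [MeasurableSpace X] [MeasurableSpace Y] (μ : Measure X) (ν : Measure Y) :
    BddBelow {c | ∃ π : Measure (X × Y), IsCoupling π μ ν ∧ c = gwCost π} := by
  refine ⟨0, ?_⟩
  rintro c ⟨π', _, rfl⟩
  exact gwCost_nonneg π'

lemma gwSq_le {X Y : Type*} [PseudoMetricSpace X] [PseudoMetricSpace Y]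
    [MeasurableSpace X] [MeasurableSpace Y] {μ : Measure X} {ν : Measure Y}
    {π : Measure (X × Y)} (h : IsCoupling π μ ν) : gwSq μ ν ≤ gwCost π :=
  csInf_le (gwSq_bddBelow μ ν) ⟨π, h, rfl⟩

lemma gwSq_exists_lt {X Y : Type*} [PseudoMetricSpace X] [PseudoMetricSpace Y]
    [MeasurableSpace X] [MeasurableSpace Y] (μ : Measure X) (ν : Measure Y)
    [IsProbabilityMeasure μ] [IsProbabilityMeasure ν] {δ : ℝ} (hδ : 0 < δ) :
    ∃ π : Measure (X × Y), IsCoupling π μ ν ∧ gwCost π < gwSq μ ν + δ := by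
  have hne : Set.Nonempty {c | ∃ π : Measure (X × Y), IsCoupling π μ ν ∧ c = gwCost π} :=
    ⟨gwCost (μ.prod ν), μ.prod ν, ⟨Measure.fst_prod, Measure.snd_prod⟩, rfl⟩
  have hlt : sInf {c | ∃ π : Measure (X × Y), IsCoupling π μ ν ∧ c = gwCost π}
      < gwSq μ ν + δ := by
    have : gwSq μ ν < gwSq μ ν + δ := lt_add_of_pos_right _ hδ
    exact this
  obtain ⟨c, ⟨π, h, rfl⟩, hc⟩ := (csInf_lt_iff (gwSq_bddBelow μ ν) hne).mp hlt
  exact ⟨π, h, hc⟩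

end MGWCost
section MGWMain

open MeasureTheory Filter Topology

lemma mgw_marg_limit {T W : Type*}
    [MetricSpace T] [CompactSpace T] [MeasurableSpace T] [BorelSpace T]
    [MetricSpace W] [CompactSpace W] [MeasurableSpace W] [BorelSpace W]
    (πs : ℕ → ProbabilityMeasure T) (πb : ProbabilityMeasure T)
    (hconv : Tendsto πs atTop (𝓝 πb)) {f : T → W} (hf : Continuous f)
    (m : Measure W) [IsProbabilityMeasure m]
    (hm : ∀ n, (πs n : Measure T).map f = m) : (πb : Measure T).map f = m := by
  have ht := ProbabilityMeasure.tendsto_map_of_tendsto_of_continuous πs πb hconv hf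
  have hconst : (fun n => (πs n).map hf.measurable.aemeasurable)
      = fun _ => (⟨m, inferInstance⟩ : ProbabilityMeasure W) := by
    funext n
    apply ProbabilityMeasure.toMeasure_injective
    rw [ProbabilityMeasure.toMeasure_map]
    exact hm n
  rw [hconst] at ht
  have h2 := tendsto_nhds_unique tendsto_const_nhds ht
  have h3 := congrArg ProbabilityMeasure.toMeasure h2
  rw [ProbabilityMeasure.toMeasure_map] at h3
  exact h3.symm

end MGWMain

/-- every weak accumulation point of minimizers of the ε-multi-marginal GW
problems, as ε → 0, has optimal `(S,X)`- and `(S,Y)`-marginals and minimizes the LGW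
functional. -/
theorem mgw_limit_is_lgw
    {S X Y : Type*}
    [MetricSpace S] [CompactSpace S] [MeasurableSpace S] [BorelSpace S]
    [MetricSpace X] [CompactSpace X] [MeasurableSpace X] [BorelSpace X]
    [MetricSpace Y] [CompactSpace Y] [MeasurableSpace Y] [BorelSpace Y]
    (σ : Measure S) (μ : Measure X) (ν : Measure Y)
    [IsProbabilityMeasure σ] [IsProbabilityMeasure μ] [IsProbabilityMeasure ν]
    (πf : ℝ → ProbabilityMeasure (S × X × Y))
    (hmin : ∀ ε : ℝ, 0 < ε →
      IsTripleCoupling (πf ε : Measure (S × X × Y)) σ μ ν ∧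
      ∀ π' : Measure (S × X × Y), IsTripleCoupling π' σ μ ν →
        mgwEps ε (πf ε : Measure (S × X × Y)) ≤ mgwEps ε π')
    (πbar : ProbabilityMeasure (S × X × Y)) (e : ℕ → ℝ)
    (hpos : ∀ n, 0 < e n) (he0 : Tendsto e atTop (𝓝 0))
    (hconv : Tendsto (fun n => πf (e n)) atTop (𝓝 πbar)) :
    IsOptGW ((πbar : Measure (S × X × Y)).map (fun p => (p.1, p.2.1))) σ μ ∧
    IsOptGW ((πbar : Measure (S × X × Y)).map (fun p => (p.1, p.2.2))) σ ν ∧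
    lgwCost (πbar : Measure (S × X × Y)) = lgw σ μ ν := by
  set πn : ℕ → ProbabilityMeasure (S × X × Y) := fun n => πf (e n) with hπndef
  have hTCn : ∀ n, IsTripleCoupling (πn n : Measure (S × X × Y)) σ μ ν :=
    fun n => (hmin (e n) (hpos n)).1
  -- marginals of πbar
  have hb1 : (πbar : Measure (S × X × Y)).map Prod.fst = σ :=
    mgw_marg_limit πn πbar hconv continuous_fst σ (fun n => (hTCn n).1)
  have hb2 : (πbar : Measure (S × X × Y)).map (fun p => p.2.1) = μ :=
    mgw_marg_limit πn πbar hconv (continuous_fst.comp continuous_snd) μ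
      (fun n => (hTCn n).2.1)
  have hb3 : (πbar : Measure (S × X × Y)).map (fun p => p.2.2) = ν :=
    mgw_marg_limit πn πbar hconv (continuous_snd.comp continuous_snd) ν
      (fun n => (hTCn n).2.2)
  have hTCbar : IsTripleCoupling (πbar : Measure (S × X × Y)) σ μ ν := ⟨hb1, hb2, hb3⟩
  have hcoup1bar : IsCoupling ((πbar : Measure (S × X × Y)).map (fun p => (p.1, p.2.1))) σ μ :=
    mgw_tc_marg1 hTCbar
  have hcoup2bar : IsCoupling ((πbar : Measure (S × X × Y)).map (fun p => (p.1, p.2.2))) σ ν :=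
    mgw_tc_marg2 hTCbar
  -- limits of functionals
  have hLlim : Tendsto (fun n => lgwCost (πn n : Measure (S × X × Y))) atTop
      (𝓝 (lgwCost (πbar : Measure (S × X × Y)))) :=
    mgwD_tendsto πn πbar hconv mgwA_cont
  have hF1lim : Tendsto (fun n => mgwD mgwB1 (πn n : Measure (S × X × Y))) atTop
      (𝓝 (mgwD mgwB1 (πbar : Measure (S × X × Y)))) :=
    mgwD_tendsto πn πbar hconv mgwB1_cont
  have hF2lim : Tendsto (fun n => mgwD mgwB2 (πn n : Measure (S × X × Y))) atTop
      (𝓝 (mgwD mgwB2 (πbar : Measure (S × X × Y)))) :=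
    mgwD_tendsto πn πbar hconv mgwB2_cont
  -- lower bounds on marginal GW costs along the sequence
  have hlow1 : ∀ n, gwSq σ μ ≤ mgwD mgwB1 (πn n : Measure (S × X × Y)) := fun n => by
    rw [← mgw_margCost1]
    exact gwSq_le (mgw_tc_marg1 (hTCn n))
  have hlow2 : ∀ n, gwSq σ ν ≤ mgwD mgwB2 (πn n : Measure (S × X × Y)) := fun n => by
    rw [← mgw_margCost2]
    exact gwSq_le (mgw_tc_marg2 (hTCn n))
  -- upper bound for the limit of marginal costs
  have hFle : mgwD mgwB1 (πbar : Measure (S × X × Y))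
      + mgwD mgwB2 (πbar : Measure (S × X × Y)) ≤ gwSq σ μ + gwSq σ ν := by
    refine le_of_forall_pos_le_add fun δ hδ => ?_
    obtain ⟨γ1, hγ1, hγ1lt⟩ := gwSq_exists_lt σ μ (δ := δ / 2) (by positivity)
    obtain ⟨γ2, hγ2, hγ2lt⟩ := gwSq_exists_lt σ ν (δ := δ / 2) (by positivity)
    haveI : IsProbabilityMeasure γ1 := mgw_prob_of_map measurable_fst hγ1.1
    haveI : IsProbabilityMeasure γ2 := mgw_prob_of_map measurable_fst hγ2.1
    obtain ⟨π', hπ'1, hπ'2⟩ := mgw_glue σ γ1 γ2 hγ1.1 hγ2.1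
    have hπ'tc : IsTripleCoupling π' σ μ ν :=
      mgw_marg_tc (by rw [hπ'1]; exact hγ1) (by rw [hπ'2]; exact hγ2)
    haveI : IsProbabilityMeasure π' := mgw_prob_of_map measurable_fst hπ'tc.1
    have hchain : ∀ n, mgwD mgwB1 (πn n : Measure (S × X × Y))
        + mgwD mgwB2 (πn n : Measure (S × X × Y))
        ≤ e n * lgwCost π' + (gwSq σ μ + gwSq σ ν + δ) := by
      intro n
      have hmle := (hmin (e n) (hpos n)).2 π' hπ'tc
      rw [mgw_split, mgw_split, mgw_margCost1, mgw_margCost2, hπ'1, hπ'2] at hmle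
      have h0 : 0 ≤ e n * lgwCost (πn n : Measure (S × X × Y)) :=
        mul_nonneg (hpos n).le (lgwCost_nonneg _)
      have hg1 : gwCost γ1 < gwSq σ μ + δ / 2 := hγ1lt
      have hg2 : gwCost γ2 < gwSq σ ν + δ / 2 := hγ2lt
      linarith
    have hrhs : Tendsto (fun n => e n * lgwCost π' + (gwSq σ μ + gwSq σ ν + δ)) atTop
        (𝓝 (0 * lgwCost π' + (gwSq σ μ + gwSq σ ν + δ))) :=
      (he0.mul_const _).add tendsto_const_nhds
    rw [zero_mul, zero_add] at hrhs
    exact le_of_tendsto_of_tendsto' (hF1lim.add hF2lim) hrhs hchain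
  -- each marginal is optimal
  have heq1 : gwCost ((πbar : Measure (S × X × Y)).map (fun p => (p.1, p.2.1))) = gwSq σ μ := by
    have h1 := gwSq_le hcoup1bar
    have h2 := gwSq_le hcoup2bar
    rw [mgw_margCost1] at h1 ⊢
    rw [mgw_margCost2] at h2
    have blow1 := le_of_tendsto_of_tendsto' tendsto_const_nhds hF1lim hlow1
    have blow2 := le_of_tendsto_of_tendsto' tendsto_const_nhds hF2lim hlow2
    linarith
  have heq2 : gwCost ((πbar : Measure (S × X × Y)).map (fun p => (p.1, p.2.2))) = gwSq σ ν := by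
    have h1 := gwSq_le hcoup1bar
    have h2 := gwSq_le hcoup2bar
    rw [mgw_margCost1] at h1
    rw [mgw_margCost2] at h2 ⊢
    have blow1 := le_of_tendsto_of_tendsto' tendsto_const_nhds hF1lim hlow1
    have blow2 := le_of_tendsto_of_tendsto' tendsto_const_nhds hF2lim hlow2
    linarith
  refine ⟨⟨hcoup1bar, heq1⟩, ⟨hcoup2bar, heq2⟩, ?_⟩
  -- part (c)
  have hmem : lgwCost (πbar : Measure (S × X × Y)) ∈
      {c | ∃ π : Measure (S × X × Y),
        IsOptGW (π.map (fun p => (p.1, p.2.1))) σ μ ∧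
        IsOptGW (π.map (fun p => (p.1, p.2.2))) σ ν ∧
        c = lgwCost π} :=
    ⟨(πbar : Measure (S × X × Y)), ⟨hcoup1bar, heq1⟩, ⟨hcoup2bar, heq2⟩, rfl⟩
  have hbdd : BddBelow {c | ∃ π : Measure (S × X × Y),
      IsOptGW (π.map (fun p => (p.1, p.2.1))) σ μ ∧
      IsOptGW (π.map (fun p => (p.1, p.2.2))) σ ν ∧
      c = lgwCost π} := by
    refine ⟨0, ?_⟩
    rintro c ⟨π', _, _, rfl⟩
    exact lgwCost_nonneg π'
  refine le_antisymm ?_ (csInf_le hbdd hmem)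
  refine le_csInf ⟨_, hmem⟩ ?_
  rintro c ⟨π', hopt1, hopt2, rfl⟩
  have hπ'tc : IsTripleCoupling π' σ μ ν := mgw_marg_tc hopt1.1 hopt2.1
  haveI : IsProbabilityMeasure π' := mgw_prob_of_map measurable_fst hπ'tc.1
  have hstep : ∀ n, lgwCost (πn n : Measure (S × X × Y)) ≤ lgwCost π' := by
    intro n
    have hmle := (hmin (e n) (hpos n)).2 π' hπ'tc
    rw [mgw_split, mgw_split] at hmle
    have h1 : gwSq σ μ
        ≤ gwCost ((πn n : Measure (S × X × Y)).map (fun p => (p.1, p.2.1))) :=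
      gwSq_le (mgw_tc_marg1 (hTCn n))
    have h2 : gwSq σ ν
        ≤ gwCost ((πn n : Measure (S × X × Y)).map (fun p => (p.1, p.2.2))) :=
      gwSq_le (mgw_tc_marg2 (hTCn n))
    have ho1 : gwCost (π'.map (fun p => (p.1, p.2.1))) = gwSq σ μ := hopt1.2
    have ho2 : gwCost (π'.map (fun p => (p.1, p.2.2))) = gwSq σ ν := hopt2.2
    have hkey : e n * lgwCost (πn n : Measure (S × X × Y)) ≤ e n * lgwCost π' := by
      rw [ho1, ho2] at hmle
      linarith
    exact le_of_mul_le_mul_left hkey (hpos n)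
  exact le_of_tendsto hLlim (Eventually.of_forall hstep)
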